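/- In the polynomial ring ℚ[a, b, c, d, e, f], let I be the ideal generated by a, b², c², c − 2e + 2, 2e − c + 2d, and e² + 2ef + f² − 2ce − cf. Then the quotient ring ℚ[a, b, c, d, e, f]/I is a finite-dimensional ℚ-vector space of dimension 8. (Hence the configuration (a, b, c, d, e, f) = (0, 0, 0, −1, 1, −1) of the Leonardo structure with λ = 3 is a realization of multiplicity 8, i.e. it has a seventh-order flexion, confirming Tarnai's (2^λ − 1)-order flex for λ = 3; the ideal is the corrected primary component, with generator b replaced by b², fixing the faulty output of Maple's primary decomposition.) -/

import Mathlib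

open MvPolynomial

noncomputable section LeonardoAux

open TensorProduct

set_option maxHeartbeats 1000000
set_option synthInstance.maxHeartbeats 200000

/-- The ideal of the Leonardo structure with `λ = 3`. -/
def leoIdeal : Ideal (MvPolynomial (Fin 6) ℚ) :=
  Ideal.span {X 0, X 1 ^ 2, X 2 ^ 2, X 2 - 2 * X 4 + 2, 2 * X 4 - X 2 + 2 * X 3,
    X 4 ^ 2 + 2 * X 4 * X 5 + X 5 ^ 2 - 2 * X 2 * X 4 - X 2 * X 5}

abbrev LeoQ := MvPolynomial (Fin 6) ℚ ⧸ leoIdeal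

abbrev A2 := AdjoinRoot ((Polynomial.X : Polynomial ℚ) ^ 2)
abbrev A4 := AdjoinRoot ((Polynomial.X : Polynomial ℚ) ^ 4)
abbrev TA := A2 ⊗[ℚ] A4

def uu : TA := (AdjoinRoot.root ((Polynomial.X : Polynomial ℚ) ^ 2)) ⊗ₜ[ℚ] (1 : A4)
def ww : TA := (1 : A2) ⊗ₜ[ℚ] (AdjoinRoot.root ((Polynomial.X : Polynomial ℚ) ^ 4))
def hh : TA := algebraMap ℚ TA (1 / 2)

lemma root2_sq : (AdjoinRoot.root ((Polynomial.X : Polynomial ℚ) ^ 2)) ^ 2 = 0 := by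
  rw [← AdjoinRoot.mk_X, ← map_pow, AdjoinRoot.mk_self]

lemma root4_pow : (AdjoinRoot.root ((Polynomial.X : Polynomial ℚ) ^ 4)) ^ 4 = 0 := by
  rw [← AdjoinRoot.mk_X, ← map_pow, AdjoinRoot.mk_self]

lemma uu_sq : uu ^ 2 = 0 := by
  rw [uu, Algebra.TensorProduct.tmul_pow, root2_sq, one_pow]
  simp

lemma ww_pow : ww ^ 4 = 0 := by
  rw [ww, Algebra.TensorProduct.tmul_pow, root4_pow, one_pow]
  simp

lemma hh_two : hh * 2 = 1 := by
  rw [hh, ← map_ofNat (algebraMap ℚ TA) 2, ← map_mul, ← map_one (algebraMap ℚ TA)]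
  norm_num

/-- The images of the six variables in `TA`. -/
def leoV : Fin 6 → TA
  | 0 => 0
  | 1 => uu
  | 2 => ww ^ 2
  | 3 => -1
  | 4 => hh * ww ^ 2 + 1
  | 5 => ww - 1

@[simp] lemma leoV_0 : leoV 0 = 0 := rfl
@[simp] lemma leoV_1 : leoV 1 = uu := rfl
@[simp] lemma leoV_2 : leoV 2 = ww ^ 2 := rfl
@[simp] lemma leoV_3 : leoV 3 = -1 := rfl
@[simp] lemma leoV_4 : leoV 4 = hh * ww ^ 2 + 1 := rfl
@[simp] lemma leoV_5 : leoV 5 = ww - 1 := rfl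

def leoPhi : MvPolynomial (Fin 6) ℚ →ₐ[ℚ] TA := aeval leoV

lemma leoPhi_vanish : ∀ p ∈ leoIdeal, leoPhi p = 0 := by
  have h : leoIdeal ≤ RingHom.ker (leoPhi : MvPolynomial (Fin 6) ℚ →+* TA) := by
    rw [leoIdeal, Ideal.span_le]
    have hu := uu_sq
    have hw := ww_pow
    have h2 := hh_two
    rintro p (rfl | rfl | rfl | rfl | rfl | rfl) <;>
      simp only [SetLike.mem_coe, RingHom.mem_ker, RingHom.coe_coe, leoPhi, map_add,
        map_sub, map_mul, map_pow, map_ofNat, MvPolynomial.aeval_X, leoV_0, leoV_1, leoV_2, leoV_3, leoV_4, leoV_5]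
    · linear_combination hu
    · linear_combination hw
    · linear_combination (-(ww ^ 2)) * h2
    · linear_combination (ww ^ 2) * h2
    · linear_combination (hh ^ 2 - 2 * hh) * hw + ww ^ 3 * h2
  exact fun p hp => h hp

/-- The induced map on the quotient. -/
def leoPhiBar : LeoQ →ₐ[ℚ] TA := Ideal.Quotient.liftₐ leoIdeal leoPhi leoPhi_vanish

def mkQ : MvPolynomial (Fin 6) ℚ →ₐ[ℚ] LeoQ := Ideal.Quotient.mkₐ ℚ leoIdeal

lemma mem_a : (X 0 : MvPolynomial (Fin 6) ℚ) ∈ leoIdeal :=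
  Ideal.subset_span (by simp)

lemma mem_b2 : (X 1 : MvPolynomial (Fin 6) ℚ) ^ 2 ∈ leoIdeal :=
  Ideal.subset_span (by simp)

lemma mem_g3 : (X 2 : MvPolynomial (Fin 6) ℚ) ^ 2 ∈ leoIdeal :=
  Ideal.subset_span (by simp)

lemma mem_g4 : (X 2 - 2 * X 4 + 2 : MvPolynomial (Fin 6) ℚ) ∈ leoIdeal :=
  Ideal.subset_span (by simp)

lemma mem_g5 : (2 * X 4 - X 2 + 2 * X 3 : MvPolynomial (Fin 6) ℚ) ∈ leoIdeal :=
  Ideal.subset_span (by simp)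

lemma mem_g6 :
    (X 4 ^ 2 + 2 * X 4 * X 5 + X 5 ^ 2 - 2 * X 2 * X 4 - X 2 * X 5 :
      MvPolynomial (Fin 6) ℚ) ∈ leoIdeal :=
  Ideal.subset_span (by simp)

/-- Cancel a nonzero rational constant in an ideal membership. -/
lemma cancel_mem (n : ℚ) (hn : n ≠ 0) {p : MvPolynomial (Fin 6) ℚ}
    (h : C n * p ∈ leoIdeal) : p ∈ leoIdeal := by
  have h2 := leoIdeal.mul_mem_left (C n⁻¹) h
  rwa [← mul_assoc, ← map_mul, inv_mul_cancel₀ hn, map_one, one_mul] at h2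

lemma two_cancel {p : MvPolynomial (Fin 6) ℚ}
    (h : (2 : MvPolynomial (Fin 6) ℚ) * p ∈ leoIdeal) : p ∈ leoIdeal := by
  refine cancel_mem 2 two_ne_zero ?_
  rwa [map_ofNat]

lemma four_cancel {p : MvPolynomial (Fin 6) ℚ}
    (h : (4 : MvPolynomial (Fin 6) ℚ) * p ∈ leoIdeal) : p ∈ leoIdeal := by
  refine cancel_mem 4 four_ne_zero ?_
  rwa [map_ofNat]

/-- `(f+1)^2 - c ∈ I` via the explicit certificate
`4·((f+1)² − c) = 4·g₆ + 3·g₃ + (−3c + 2e + 4f + 2)·g₄`. -/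
lemma mem_key : ((X 5 + 1) ^ 2 - X 2 : MvPolynomial (Fin 6) ℚ) ∈ leoIdeal := by
  refine four_cancel ?_
  have h : (4 : MvPolynomial (Fin 6) ℚ) * ((X 5 + 1) ^ 2 - X 2) =
      4 * (X 4 ^ 2 + 2 * X 4 * X 5 + X 5 ^ 2 - 2 * X 2 * X 4 - X 2 * X 5)
        + 3 * (X 2 ^ 2)
        + (-3 * X 2 + 2 * X 4 + 4 * X 5 + 2) * (X 2 - 2 * X 4 + 2) := by ring
  rw [h]
  exact leoIdeal.add_mem
    (leoIdeal.add_mem (leoIdeal.mul_mem_left _ mem_g6) (leoIdeal.mul_mem_left _ mem_g3))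
    (leoIdeal.mul_mem_left _ mem_g4)

/-- `d + 1 ∈ I` since `2(d+1) = g₄ + g₅`. -/
lemma mem_d : ((X 3 + 1 : MvPolynomial (Fin 6) ℚ)) ∈ leoIdeal := by
  refine two_cancel ?_
  have h : (2 : MvPolynomial (Fin 6) ℚ) * (X 3 + 1) =
      (X 2 - 2 * X 4 + 2) + (2 * X 4 - X 2 + 2 * X 3) := by ring
  rw [h]
  exact leoIdeal.add_mem mem_g4 mem_g5

/-- `(f+1)^4 ∈ I`. -/
lemma mem_f4 : ((X 5 + 1) ^ 4 : MvPolynomial (Fin 6) ℚ) ∈ leoIdeal := by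
  have h : ((X 5 + 1) ^ 4 : MvPolynomial (Fin 6) ℚ) =
      ((X 5 + 1) ^ 2 - X 2) * ((X 5 + 1) ^ 2 - X 2) +
        (2 * X 2) * ((X 5 + 1) ^ 2 - X 2) + X 2 ^ 2 := by ring
  rw [h]
  exact leoIdeal.add_mem
    (leoIdeal.add_mem (leoIdeal.mul_mem_left _ mem_key) (leoIdeal.mul_mem_left _ mem_key))
    mem_g3

lemma C_half_two : (C (1 / 2 : ℚ) : MvPolynomial (Fin 6) ℚ) * 2 = 1 := by
  rw [← map_ofNat (MvPolynomial.C : ℚ →+* MvPolynomial (Fin 6) ℚ) 2, ← map_mul,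
    ← map_one (MvPolynomial.C : ℚ →+* MvPolynomial (Fin 6) ℚ)]
  norm_num

/-- `(1/2)(f+1)² + 1 − e ∈ I`. -/
lemma mem_q : (C (1 / 2 : ℚ) * (X 5 + 1) ^ 2 + 1 - X 4 : MvPolynomial (Fin 6) ℚ)
    ∈ leoIdeal := by
  refine two_cancel ?_
  have h : (2 : MvPolynomial (Fin 6) ℚ) * (C (1 / 2 : ℚ) * (X 5 + 1) ^ 2 + 1 - X 4) =
      ((X 5 + 1) ^ 2 - X 2) + (X 2 - 2 * X 4 + 2) := by
    linear_combination ((X 5 + 1) ^ 2) * C_half_two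
  rw [h]
  exact leoIdeal.add_mem mem_key mem_g4

def psi2 : A2 →ₐ[ℚ] LeoQ :=
  AdjoinRoot.liftAlgHom _ (Algebra.ofId ℚ LeoQ) (mkQ (X 1)) (by
    have h0 : Polynomial.aeval (mkQ (X 1)) ((Polynomial.X : Polynomial ℚ) ^ 2) = 0 := by
      rw [map_pow, Polynomial.aeval_X, ← map_pow]
      exact Ideal.Quotient.eq_zero_iff_mem.mpr mem_b2
    exact show Polynomial.eval₂ (Algebra.ofId ℚ LeoQ : ℚ →+* LeoQ) (mkQ (X 1))
      ((Polynomial.X : Polynomial ℚ) ^ 2) = 0 from h0)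

def psi4 : A4 →ₐ[ℚ] LeoQ :=
  AdjoinRoot.liftAlgHom _ (Algebra.ofId ℚ LeoQ) (mkQ (X 5) + 1) (by
    have h0 : Polynomial.aeval (mkQ (X 5) + 1) ((Polynomial.X : Polynomial ℚ) ^ 4) = 0 := by
      rw [map_pow, Polynomial.aeval_X]
      have h : mkQ (X 5) + 1 = mkQ (X 5 + 1) := by rw [map_add, map_one]
      rw [h, ← map_pow]
      exact Ideal.Quotient.eq_zero_iff_mem.mpr mem_f4
    exact show Polynomial.eval₂ (Algebra.ofId ℚ LeoQ : ℚ →+* LeoQ) (mkQ (X 5) + 1)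
      ((Polynomial.X : Polynomial ℚ) ^ 4) = 0 from h0)

def leoPsi : TA →ₐ[ℚ] LeoQ := Algebra.TensorProduct.productMap psi2 psi4

lemma mkQ_eq_zero {p : MvPolynomial (Fin 6) ℚ} (h : p ∈ leoIdeal) : mkQ p = 0 :=
  Ideal.Quotient.eq_zero_iff_mem.mpr h

lemma phi_psi : (leoPhiBar.comp leoPsi) = AlgHom.id ℚ TA := by
  refine Algebra.TensorProduct.ext (AdjoinRoot.algHom_ext ?_) (AdjoinRoot.algHom_ext ?_) <;>
    simp only [AlgHom.comp_apply, Algebra.TensorProduct.includeLeft_apply,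
      Algebra.TensorProduct.includeRight_apply, AlgHom.coe_id, id_eq, leoPsi,
      Algebra.TensorProduct.productMap_left_apply, Algebra.TensorProduct.productMap_right_apply,
      AlgHom.restrictScalars_apply, psi2, psi4, AdjoinRoot.liftAlgHom_root, map_add, map_one,
      leoPhiBar, mkQ,
      Ideal.Quotient.mkₐ_eq_mk, Ideal.Quotient.liftₐ_apply, Ideal.Quotient.lift_mk,
      AlgHom.coe_toRingHom, leoPhi, MvPolynomial.aeval_X, leoV, uu, ww]
  all_goals erw [Ideal.Quotient.lift_mk, MvPolynomial.aeval_X]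
  all_goals simp only [leoV, uu, ww]
  ring

lemma psi_phi : (leoPsi.comp leoPhiBar) = AlgHom.id ℚ LeoQ := by
  refine Ideal.Quotient.algHom_ext ℚ (MvPolynomial.algHom_ext fun i => ?_)
  have key : ∀ i : Fin 6, (leoPsi.comp leoPhiBar).comp (Ideal.Quotient.mkₐ ℚ leoIdeal) (X i)
      = leoPsi (leoV i) := by
    intro i
    simp only [AlgHom.comp_apply, Ideal.Quotient.mkₐ_eq_mk, leoPhiBar,
      Ideal.Quotient.liftₐ_apply, Ideal.Quotient.lift_mk, AlgHom.coe_toRingHom, leoPhi, MvPolynomial.aeval_X]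
    exact congrArg leoPsi (MvPolynomial.aeval_X leoV i)
  rw [key]
  have hR : (AlgHom.id ℚ LeoQ).comp (Ideal.Quotient.mkₐ ℚ leoIdeal) (X i) = mkQ (X i) := rfl
  rw [hR]
  fin_cases i
  · show leoPsi (leoV 0) = mkQ (X 0)
    rw [show leoV 0 = 0 from rfl, map_zero, mkQ_eq_zero mem_a]
  · show leoPsi (leoV 1) = mkQ (X 1)
    rw [show leoV 1 = uu from rfl, uu, leoPsi,
      Algebra.TensorProduct.productMap_left_apply, psi2, AdjoinRoot.liftAlgHom_root]
  · show leoPsi (leoV 2) = mkQ (X 2)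
    rw [show leoV 2 = ww ^ 2 from rfl, ww, map_pow, leoPsi,
      Algebra.TensorProduct.productMap_right_apply, psi4, AdjoinRoot.liftAlgHom_root]
    have h := mkQ_eq_zero mem_key
    rw [map_sub, map_pow, map_add, map_one, sub_eq_zero] at h
    exact h
  · show leoPsi (leoV 3) = mkQ (X 3)
    rw [show leoV 3 = -1 from rfl, map_neg, map_one]
    have h := mkQ_eq_zero mem_d
    rw [map_add, map_one] at h
    linear_combination -h
  · show leoPsi (leoV 4) = mkQ (X 4)
    rw [show leoV 4 = hh * ww ^ 2 + 1 from rfl, map_add, map_one, map_mul, hh,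
      AlgHom.commutes, ww, map_pow, leoPsi,
      Algebra.TensorProduct.productMap_right_apply, psi4, AdjoinRoot.liftAlgHom_root]
    have h := mkQ_eq_zero mem_q
    rw [map_sub, map_add, map_one, map_mul, map_pow, map_add, map_one, sub_eq_zero] at h
    have hC : (mkQ (MvPolynomial.C (1 / 2 : ℚ)) : LeoQ) = algebraMap ℚ LeoQ (1 / 2) := by
      simp [mkQ, Ideal.Quotient.mkₐ_eq_mk, MvPolynomial.algebraMap_eq]
    rw [hC] at h
    exact h
  · show leoPsi (leoV 5) = mkQ (X 5)
    rw [show leoV 5 = ww - 1 from rfl, map_sub, map_one, ww, leoPsi,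
      Algebra.TensorProduct.productMap_right_apply, psi4, AdjoinRoot.liftAlgHom_root]
    exact add_sub_cancel_right _ 1

def leoEquiv : LeoQ ≃ₐ[ℚ] TA := AlgEquiv.ofAlgHom leoPhiBar leoPsi phi_psi psi_phi

def basisA2 : Module.Basis (Fin 2) ℚ A2 :=
  (AdjoinRoot.powerBasis' (Polynomial.monic_X_pow 2)).basis.reindex
    (finCongr (by simp [AdjoinRoot.powerBasis']))

def basisA4 : Module.Basis (Fin 4) ℚ A4 :=
  (AdjoinRoot.powerBasis' (Polynomial.monic_X_pow 4)).basis.reindex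
    (finCongr (by simp [AdjoinRoot.powerBasis']))

def basisTA : Module.Basis (Fin 2 × Fin 4) ℚ TA := Module.Basis.tensorProduct basisA2 basisA4

lemma finrank_TA : Module.finrank ℚ TA = 8 := by
  rw [Module.finrank_eq_card_basis basisTA]
  simp

lemma leo_main : FiniteDimensional ℚ LeoQ ∧ Module.finrank ℚ LeoQ = 8 := by
  have hfd : FiniteDimensional ℚ TA := Module.Finite.of_basis basisTA
  have e := leoEquiv.toLinearEquiv
  refine ⟨Module.Finite.equiv e.symm, ?_⟩
  rw [e.finrank_eq, finrank_TA]

end LeonardoAux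

theorem leonardo_lambda_three_multiplicity_eight :
    let a : MvPolynomial (Fin 6) ℚ := X 0
    let b : MvPolynomial (Fin 6) ℚ := X 1
    let c : MvPolynomial (Fin 6) ℚ := X 2
    let d : MvPolynomial (Fin 6) ℚ := X 3
    let e : MvPolynomial (Fin 6) ℚ := X 4
    let f : MvPolynomial (Fin 6) ℚ := X 5
    let I : Ideal (MvPolynomial (Fin 6) ℚ) :=
      Ideal.span {a, b ^ 2, c ^ 2, c - 2 * e + 2, 2 * e - c + 2 * d,
        e ^ 2 + 2 * e * f + f ^ 2 - 2 * c * e - c * f}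
    FiniteDimensional ℚ (MvPolynomial (Fin 6) ℚ ⧸ I) ∧
      Module.finrank ℚ (MvPolynomial (Fin 6) ℚ ⧸ I) = 8 := by
  intro a b c d e f I
  exact leo_main
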